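/- Let θ be a cover-preserving join-congruence of the square grid G_n such that, for all i ∈ {1,…,n}, ((i−1,0),(i,0)) ∉ θ and ((0,i−1),(0,i)) ∉ θ. Then θ equals the smallest join-congruence of G_n containing δ(B) for every source cell B of θ. -/

import Mathlib

/-- The square grid `G_n`: the direct product of two `(n+1)`-element chains. -/
abbrev Grid (n : ℕ) := Fin (n + 1) × Fin (n + 1)

/-- `θ` is a join-congruence: an equivalence relation compatible with `⊔`. -/
def IsJoinCong {S : Type*} [SemilatticeSup S] (θ : S → S → Prop) : Prop :=
  Equivalence θ ∧ ∀ a b c : S, θ a b → θ (a ⊔ c) (b ⊔ c)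

/-- The smallest join-congruence containing the relation `R`. -/
def joinCongGen {S : Type*} [SemilatticeSup S] (R : S → S → Prop) : S → S → Prop :=
  fun a b => ∀ θ : S → S → Prop, IsJoinCong θ → (∀ x y, R x y → θ x y) → θ a b

theorem joinCongGen_equivalence {S : Type*} [SemilatticeSup S] (R : S → S → Prop) :
    Equivalence (joinCongGen R) where
  refl a := fun _θ hθ _ => hθ.1.refl a
  symm h := fun θ hθ hR => hθ.1.symm (h θ hθ hR)
  trans h₁ h₂ := fun θ hθ hR => hθ.1.trans (h₁ θ hθ hR) (h₂ θ hθ hR)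

/-- The generating pairs of `β_π`. -/
def betaGen {n : ℕ} (π : Equiv.Perm (Fin n)) : Grid n → Grid n → Prop :=
  fun a b => ∃ i : Fin n,
    (a = (i.castSucc, (π i).succ) ∧ b = (i.succ, (π i).succ)) ∨
    (a = (i.succ, (π i).castSucc) ∧ b = (i.succ, (π i).succ))

/-- `β_π`, the smallest join-congruence on the grid containing `betaGen π`. -/
def beta {n : ℕ} (π : Equiv.Perm (Fin n)) : Grid n → Grid n → Prop :=
  joinCongGen (betaGen π)

/-- The setoid on the grid determined by `β_π`. -/
def betaSetoid {n : ℕ} (π : Equiv.Perm (Fin n)) : Setoid (Grid n) :=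
  ⟨beta π, joinCongGen_equivalence _⟩

/-- The quotient `G_n/β_π`. -/
def QuotGrid {n : ℕ} (π : Equiv.Perm (Fin n)) := Quotient (betaSetoid π)

/-- The order on `G_n/β_π`: `[a] ≤ [b]` iff `(a ⊔ b, b) ∈ β_π`. -/
instance QuotGrid.instLE {n : ℕ} (π : Equiv.Perm (Fin n)) : LE (QuotGrid π) :=
  ⟨fun x y => ∃ a b : Grid n,
    x = Quotient.mk (betaSetoid π) a ∧ y = Quotient.mk (betaSetoid π) b ∧ beta π (a ⊔ b) b⟩

/-- The quotient order induced by a join-congruence `θ`: `[a] ≤ [b]` iff `θ (a ⊔ b) b`. -/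
def QLe {S : Type*} [SemilatticeSup S] (θ : S → S → Prop) (a b : S) : Prop :=
  θ (a ⊔ b) b

/-- The corresponding strict order on θ-classes. -/
def QLt {S : Type*} [SemilatticeSup S] (θ : S → S → Prop) (a b : S) : Prop :=
  QLe θ a b ∧ ¬ QLe θ b a

/-- `θ` is cover-preserving: whenever `x ⋖ y`, the classes satisfy `[x] = [y]` or
`[x] ⋖ [y]` in the quotient (i.e. `[x] < [y]` with no class strictly in between). -/
def CoverPreservingJC {S : Type*} [Lattice S] (θ : S → S → Prop) : Prop :=
  ∀ x y : S, x ⋖ y →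
    θ x y ∨ (QLt θ x y ∧ ∀ z : S, QLt θ x z → QLt θ z y → False)

/-- The 4-cell `[(i−1,j−1),(i,j)]` is a source cell of `θ`: both upper edges are
collapsed but the long diagonal is not. -/
def SourceCell {n : ℕ} (θ : Grid n → Grid n → Prop) (i j : Fin n) : Prop :=
  θ (i.castSucc, j.succ) (i.succ, j.succ) ∧
  θ (i.succ, j.castSucc) (i.succ, j.succ) ∧
  ¬ θ (i.castSucc, j.castSucc) (i.succ, j.succ)

/-- The generating pairs of `δ(B)` for the 4-cell `B = [(i−1,j−1),(i,j)]`: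
the two upper edges of `B`. -/
def deltaGen {n : ℕ} (i j : Fin n) : Grid n → Grid n → Prop :=
  fun a b => (a = (i.castSucc, j.succ) ∧ b = (i.succ, j.succ)) ∨
             (a = (i.succ, j.castSucc) ∧ b = (i.succ, j.succ))

section AuxSourceCell

theorem joinCongGen_isJoinCong {S : Type*} [SemilatticeSup S] (R : S → S → Prop) :
    IsJoinCong (joinCongGen R) :=
  ⟨joinCongGen_equivalence R, fun a b c h => fun θ hθ hR => hθ.2 a b c (h θ hθ hR)⟩

theorem grid_sup_eq {n : ℕ} {a c b d e f : Fin (n + 1)} (h1 : a ⊔ c = e) (h2 : b ⊔ d = f) :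
    ((a, b) : Grid n) ⊔ (c, d) = (e, f) := by
  rw [show ((a, b) : Grid n) ⊔ (c, d) = (a ⊔ c, b ⊔ d) from rfl, h1, h2]

theorem fin_castSucc_covBy_succ {n : ℕ} (i : Fin n) : i.castSucc ⋖ i.succ := by
  refine ⟨Fin.castSucc_lt_succ (i := i), fun c h1 h2 => ?_⟩
  exact absurd (Fin.le_castSucc_iff.mpr h2) (not_le.mpr h1)

variable {n : ℕ} {θ : Grid n → Grid n → Prop}

/-- The source-cell generating relation associated with `θ`. -/
def scGen (θ : Grid n → Grid n → Prop) : Grid n → Grid n → Prop :=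
  fun a b => ∃ i j : Fin n, SourceCell θ i j ∧ deltaGen i j a b

theorem scGen_collapses_horiz_edge (hjc : IsJoinCong θ) (hcp : CoverPreservingJC θ)
    (hc : ∀ i : Fin n, ¬ θ (i.castSucc, (0 : Fin (n + 1))) (i.succ, (0 : Fin (n + 1)))) :
    ∀ (j : Fin (n + 1)) (i : Fin n), θ (i.castSucc, j) (i.succ, j) →
      joinCongGen (scGen θ) (i.castSucc, j) (i.succ, j) := by
  intro j
  induction j using Fin.induction with
  | zero => intro i h; exact absurd h (hc i)
  | succ k ih =>
    intro i h
    have hlei : i.castSucc ≤ i.succ := (Fin.castSucc_lt_succ (i := i)).le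
    have hlek : k.castSucc ≤ k.succ := (Fin.castSucc_lt_succ (i := k)).le
    by_cases hlow : θ (i.castSucc, k.castSucc) (i.succ, k.castSucc)
    · have h2 := (joinCongGen_isJoinCong (scGen θ)).2 _ _ (i.castSucc, k.succ) (ih i hlow)
      rwa [grid_sup_eq (sup_idem _) (sup_eq_right.mpr hlek),
        grid_sup_eq (sup_eq_left.mpr hlei) (sup_eq_right.mpr hlek)] at h2
    · -- source cell at (i, k)
      set x : Grid n := (i.castSucc, k.castSucc) with hx
      set y : Grid n := (i.succ, k.castSucc) with hy
      set u : Grid n := (i.castSucc, k.succ) with hu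
      set v : Grid n := (i.succ, k.succ) with hv
      have exy : x ⊔ y = y := grid_sup_eq (sup_eq_right.mpr hlei) (sup_idem _)
      have eyx : y ⊔ x = y := grid_sup_eq (sup_eq_left.mpr hlei) (sup_idem _)
      have evy : v ⊔ y = v := grid_sup_eq (sup_idem _) (sup_eq_left.mpr hlek)
      have eyu : y ⊔ u = v := grid_sup_eq (sup_eq_left.mpr hlei) (sup_eq_right.mpr hlek)
      have euy : u ⊔ y = v := grid_sup_eq (sup_eq_right.mpr hlei) (sup_eq_left.mpr hlek)
      have exu : x ⊔ u = u := grid_sup_eq (sup_idem _) (sup_eq_right.mpr hlek)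
      have eux : u ⊔ x = u := grid_sup_eq (sup_idem _) (sup_eq_left.mpr hlek)
      -- the right edge of the cell is collapsed
      have hyv : θ y v := by
        by_contra hyv
        have hxu : x ⋖ u := Prod.mk_covBy_mk_iff_right.mpr (fin_castSucc_covBy_succ k)
        rcases hcp x u hxu with hθxu | ⟨_, hnomid⟩
        · have hxv : θ x v := hjc.1.trans hθxu h
          have h3 := hjc.2 x v y hxv
          rw [exy, evy] at h3
          exact hyv h3
        · refine hnomid y ⟨?_, ?_⟩ ⟨?_, ?_⟩
          · show θ (x ⊔ y) y; rw [exy]; exact hjc.1.refl y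
          · show ¬ θ (y ⊔ x) x; rw [eyx]
            exact fun h4 => hlow (hjc.1.symm h4)
          · show θ (y ⊔ u) u; rw [eyu]; exact hjc.1.symm h
          · show ¬ θ (u ⊔ y) y; rw [euy]
            exact fun h4 => hyv (hjc.1.symm h4)
      have hdiag : ¬ θ x v := by
        intro hxv
        have h3 := hjc.2 x v y hxv
        rw [exy, evy] at h3
        exact hlow (hjc.1.trans hxv (hjc.1.symm h3))
      exact fun θ' hθ' hR => hR _ _ ⟨i, k, ⟨h, hyv, hdiag⟩, Or.inl ⟨rfl, rfl⟩⟩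

theorem scGen_collapses_vert_edge (hjc : IsJoinCong θ) (hcp : CoverPreservingJC θ)
    (hd : ∀ i : Fin n, ¬ θ ((0 : Fin (n + 1)), i.castSucc) ((0 : Fin (n + 1)), i.succ)) :
    ∀ (a : Fin (n + 1)) (j : Fin n), θ (a, j.castSucc) (a, j.succ) →
      joinCongGen (scGen θ) (a, j.castSucc) (a, j.succ) := by
  intro a
  induction a using Fin.induction with
  | zero => intro j h; exact absurd h (hd j)
  | succ i ih =>
    intro j h
    have hlei : i.castSucc ≤ i.succ := (Fin.castSucc_lt_succ (i := i)).le
    have hlej : j.castSucc ≤ j.succ := (Fin.castSucc_lt_succ (i := j)).le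
    by_cases hlow : θ (i.castSucc, j.castSucc) (i.castSucc, j.succ)
    · have h2 := (joinCongGen_isJoinCong (scGen θ)).2 _ _ (i.succ, j.castSucc) (ih j hlow)
      rwa [grid_sup_eq (sup_eq_right.mpr hlei) (sup_idem _),
        grid_sup_eq (sup_eq_right.mpr hlei) (sup_eq_left.mpr hlej)] at h2
    · set x : Grid n := (i.castSucc, j.castSucc) with hx
      set y : Grid n := (i.succ, j.castSucc) with hy
      set u : Grid n := (i.castSucc, j.succ) with hu
      set v : Grid n := (i.succ, j.succ) with hv
      have exu : x ⊔ u = u := grid_sup_eq (sup_idem _) (sup_eq_right.mpr hlej)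
      have eux : u ⊔ x = u := grid_sup_eq (sup_idem _) (sup_eq_left.mpr hlej)
      have evu : v ⊔ u = v := grid_sup_eq (sup_eq_left.mpr hlei) (sup_idem _)
      have euy : u ⊔ y = v := grid_sup_eq (sup_eq_right.mpr hlei) (sup_eq_left.mpr hlej)
      have eyu : y ⊔ u = v := grid_sup_eq (sup_eq_left.mpr hlei) (sup_eq_right.mpr hlej)
      -- the top edge of the cell is collapsed
      have huv : θ u v := by
        by_contra huv
        have hxy : x ⋖ y := Prod.mk_covBy_mk_iff_left.mpr (fin_castSucc_covBy_succ i)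
        rcases hcp x y hxy with hθxy | ⟨_, hnomid⟩
        · have hxv : θ x v := hjc.1.trans hθxy h
          have h3 := hjc.2 x v u hxv
          rw [exu, evu] at h3
          exact huv h3
        · refine hnomid u ⟨?_, ?_⟩ ⟨?_, ?_⟩
          · show θ (x ⊔ u) u; rw [exu]; exact hjc.1.refl u
          · show ¬ θ (u ⊔ x) x; rw [eux]
            exact fun h4 => hlow (hjc.1.symm h4)
          · show θ (u ⊔ y) y; rw [euy]; exact hjc.1.symm h
          · show ¬ θ (y ⊔ u) u; rw [eyu]
            exact fun h4 => huv (hjc.1.symm h4)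
      have hdiag : ¬ θ x v := by
        intro hxv
        have h3 := hjc.2 x v u hxv
        rw [exu, evu] at h3
        exact hlow (hjc.1.trans hxv (hjc.1.symm h3))
      exact fun θ' hθ' hR => hR _ _ ⟨i, j, ⟨huv, h, hdiag⟩, Or.inr ⟨rfl, rfl⟩⟩

theorem scGen_collapses_horiz_seg (hjc : IsJoinCong θ) (hcp : CoverPreservingJC θ)
    (hc : ∀ i : Fin n, ¬ θ (i.castSucc, (0 : Fin (n + 1))) (i.succ, (0 : Fin (n + 1)))) :
    ∀ (c : Fin (n + 1)) (b a : Fin (n + 1)), a ≤ c → θ (a, b) (c, b) →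
      joinCongGen (scGen θ) ((a, b) : Grid n) (c, b) := by
  intro c
  induction c using Fin.induction with
  | zero =>
    intro b a hle _
    rw [Fin.le_zero_iff.mp hle]
    exact (joinCongGen_equivalence (scGen θ)).refl _
  | succ i ih =>
    intro b a hle h
    rcases lt_or_eq_of_le hle with hlt | rfl
    · have hle' : a ≤ i.castSucc := Fin.le_castSucc_iff.mpr hlt
      have hmid : θ (i.castSucc, b) (i.succ, b) := by
        have h2 := hjc.2 _ _ (i.castSucc, b) h
        rwa [grid_sup_eq (sup_eq_right.mpr hle') (sup_idem _),
          grid_sup_eq (sup_eq_left.mpr (Fin.castSucc_lt_succ (i := i)).le) (sup_idem _)] at h2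
      have hlowseg : θ (a, b) (i.castSucc, b) := hjc.1.trans h (hjc.1.symm hmid)
      exact (joinCongGen_equivalence (scGen θ)).trans (ih b a hle' hlowseg)
        (scGen_collapses_horiz_edge hjc hcp hc b i hmid)
    · exact (joinCongGen_equivalence (scGen θ)).refl _

theorem scGen_collapses_vert_seg (hjc : IsJoinCong θ) (hcp : CoverPreservingJC θ)
    (hd : ∀ i : Fin n, ¬ θ ((0 : Fin (n + 1)), i.castSucc) ((0 : Fin (n + 1)), i.succ)) :
    ∀ (c : Fin (n + 1)) (b a : Fin (n + 1)), a ≤ c → θ (b, a) (b, c) →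
      joinCongGen (scGen θ) ((b, a) : Grid n) (b, c) := by
  intro c
  induction c using Fin.induction with
  | zero =>
    intro b a hle _
    rw [Fin.le_zero_iff.mp hle]
    exact (joinCongGen_equivalence (scGen θ)).refl _
  | succ i ih =>
    intro b a hle h
    rcases lt_or_eq_of_le hle with hlt | rfl
    · have hle' : a ≤ i.castSucc := Fin.le_castSucc_iff.mpr hlt
      have hmid : θ (b, i.castSucc) (b, i.succ) := by
        have h2 := hjc.2 _ _ (b, i.castSucc) h
        rwa [grid_sup_eq (sup_idem _) (sup_eq_right.mpr hle'),
          grid_sup_eq (sup_idem _) (sup_eq_left.mpr (Fin.castSucc_lt_succ (i := i)).le)] at h2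
      have hlowseg : θ (b, a) (b, i.castSucc) := hjc.1.trans h (hjc.1.symm hmid)
      exact (joinCongGen_equivalence (scGen θ)).trans (ih b a hle' hlowseg)
        (scGen_collapses_vert_edge hjc hcp hd b i hmid)
    · exact (joinCongGen_equivalence (scGen θ)).refl _

end AuxSourceCell

/-- a cover-preserving join-congruence `θ` of the square grid `G_n`
collapsing no edge of the two lower boundary chains equals the smallest
join-congruence containing `δ(B)` for every source cell `B` of `θ`. -/
theorem joinCong_eq_gen_by_source_cells {n : ℕ} (θ : Grid n → Grid n → Prop)
    (hjc : IsJoinCong θ) (hcp : CoverPreservingJC θ)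
    (hc : ∀ i : Fin n, ¬ θ (i.castSucc, (0 : Fin (n + 1))) (i.succ, (0 : Fin (n + 1))))
    (hd : ∀ i : Fin n, ¬ θ ((0 : Fin (n + 1)), i.castSucc) ((0 : Fin (n + 1)), i.succ)) :
    θ = joinCongGen (fun a b => ∃ i j : Fin n, SourceCell θ i j ∧ deltaGen i j a b) := by
  have hgen : (fun a b => ∃ i j : Fin n, SourceCell θ i j ∧ deltaGen i j a b) = scGen θ := rfl
  rw [hgen]
  funext a b
  apply propext
  constructor
  · intro hab
    have key : ∀ c d : Grid n, c ≤ d → θ c d → joinCongGen (scGen θ) c d := by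
      rintro ⟨c1, c2⟩ ⟨d1, d2⟩ hle hcd
      obtain ⟨h1, h2⟩ := Prod.mk_le_mk.mp hle
      have hmd : θ (d1, c2) (d1, d2) := by
        have h3 := hjc.2 _ _ (d1, c2) hcd
        rwa [grid_sup_eq (sup_eq_right.mpr h1) (sup_idem _),
          grid_sup_eq (sup_idem _) (sup_eq_left.mpr h2)] at h3
      have hcm : θ (c1, c2) (d1, c2) := hjc.1.trans hcd (hjc.1.symm hmd)
      exact (joinCongGen_equivalence (scGen θ)).trans
        (scGen_collapses_horiz_seg hjc hcp hc d1 c2 c1 h1 hcm)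
        (scGen_collapses_vert_seg hjc hcp hd d2 d1 c2 h2 hmd)
    have ha : θ a (a ⊔ b) := by
      have h1 := hjc.2 a b a hab
      rwa [sup_idem, sup_comm b a] at h1
    have hb : θ b (a ⊔ b) := by
      have h1 := hjc.2 b a b (hjc.1.symm hab)
      rwa [sup_idem, sup_comm a b, ← sup_comm a b] at h1
    exact (joinCongGen_equivalence (scGen θ)).trans
      (key a (a ⊔ b) le_sup_left ha)
      ((joinCongGen_equivalence (scGen θ)).symm (key b (a ⊔ b) le_sup_right hb))
  · intro h
    refine h θ hjc ?_
    rintro x y ⟨i, j, src, (⟨rfl, rfl⟩ | ⟨rfl, rfl⟩)⟩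
    · exact src.1
    · exact src.2.1
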